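/- Let α > 0, δ = 2/α, R > 0, μ₁ > 0, μ₂ > 0, a_n ∈ (0,1), R_n > 0, and integers 1 ≤ n ≤ M. Define F(y) = (2/R²) ∫_0^R (1 - e^{-(1+r^α) y}) r dr, F_{(n)}(y) = ∑_{k=n}^{M} C(M,k) F(y)^k (1-F(y))^{M-k}, ℓ = 1 + 2R^α/(α+2), φ_n = M!/((M-n)!(n-1)!), and the eavesdropper density f(x) = μ₁ e^{ -μ₁ Γ(δ, μ₂ x)/x^δ } ( μ₂^δ e^{-μ₂ x}/x + δ Γ(δ, μ₂ x)/x^{δ+1} ) for x > 0, where Γ(s,u) = ∫_u^∞ t^{s-1} e^{-t} dt. Assume Q = ∫_0^∞ f(x) (2^{R_n}(1+x) - 1)^n dx < ∞. Then lim_{ρ → ∞} ρ^n ∫_0^∞ f(x) F_{(n)}( (2^{R_n}(1+x) - 1)/(ρ a_n) ) dx = (φ_n ℓ^n / (n a_n^n)) · Q. -/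

import Mathlib

open MeasureTheory Filter Real Finset

/-- Upper incomplete gamma function `Γ(s, u) = ∫_u^∞ t^(s-1) e^(-t) dt`. -/
noncomputable def upperIncGamma (s u : ℝ) : ℝ :=
  ∫ t in Set.Ioi u, t ^ (s - 1) * Real.exp (-t)

private lemma exp_neg_lb_aux {u : ℝ} (hu : 0 ≤ u) : u - u ^ 2 ≤ 1 - Real.exp (-u) := by
  have h1 : (1:ℝ) + u ≤ Real.exp u := by linarith [Real.add_one_le_exp u]
  have hpos : (0:ℝ) < 1 + u := by linarith
  have h2 : Real.exp (-u) ≤ 1 / (1 + u) := by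
    rw [Real.exp_neg, inv_eq_one_div]
    exact one_div_le_one_div_of_le hpos h1
  have h3 : u - u ^ 2 ≤ 1 - 1 / (1 + u) := by
    rw [sub_div' hpos.ne', le_div_iff₀ hpos]
    nlinarith
  linarith

open intervalIntegral in
private lemma F_facts_aux (α R y : ℝ) (hα : 0 < α) (hR : 0 < R) (hy : 0 ≤ y) :
    0 ≤ (2/R^2) * (∫ r in (0:ℝ)..R, (1 - Real.exp (-((1 + r ^ α) * y))) * r) ∧
    (2/R^2) * (∫ r in (0:ℝ)..R, (1 - Real.exp (-((1 + r ^ α) * y))) * r) ≤ 1 ∧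
    (2/R^2) * (∫ r in (0:ℝ)..R, (1 - Real.exp (-((1 + r ^ α) * y))) * r) ≤ (1 + 2*R^α/(α+2)) * y ∧
    (1 + 2*R^α/(α+2)) * y - (1+R^α)^2 * y^2 ≤
      (2/R^2) * (∫ r in (0:ℝ)..R, (1 - Real.exp (-((1 + r ^ α) * y))) * r) := by
  have hrpow : Continuous fun r : ℝ => r ^ α := by
    rw [continuous_iff_continuousAt]; intro x
    exact Real.continuousAt_rpow_const x α (Or.inr hα.le)
  have hcont : Continuous fun r : ℝ => (1 - Real.exp (-((1 + r ^ α) * y))) * r := by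
    fun_prop
  have hci : IntervalIntegrable (fun r : ℝ => (1 - Real.exp (-((1 + r ^ α) * y))) * r)
      volume 0 R := hcont.intervalIntegrable _ _
  have hR2 : (0:ℝ) < 2 / R ^ 2 := by positivity
  have hα2 : (0:ℝ) < α + 2 := by linarith
  have hpowr : ∀ r : ℝ, 0 ≤ r → r ^ α * r = r ^ (α + 1) := by
    intro r hr
    rcases hr.eq_or_lt with h | h
    · simp [← h, Real.zero_rpow (by linarith : α + 1 ≠ 0), Real.zero_rpow hα.ne']
    · rw [Real.rpow_add h, Real.rpow_one]
  have hrpn : ∀ r : ℝ, 0 ≤ r → (0:ℝ) ≤ r ^ α := fun r hr => Real.rpow_nonneg hr α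
  have hv1 : IntervalIntegrable (fun r : ℝ => (1 + r ^ α) * y * r) volume 0 R := by
    apply Continuous.intervalIntegrable; fun_prop
  have hv2 : IntervalIntegrable (fun r : ℝ => (1 + r ^ α) * y * r - (1+R^α)^2 * y^2 * r)
      volume 0 R := by
    apply Continuous.intervalIntegrable; fun_prop
  have hJ : (∫ r in (0:ℝ)..R, (1 + r ^ α) * r) = R^2/2 + R^(α+2)/(α+2) := by
    have he : ∀ r ∈ Set.uIcc (0:ℝ) R, (1 + r ^ α) * r = r + r ^ (α+1) := by
      intro r hr
      rw [Set.uIcc_of_le hR.le] at hr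
      rw [add_mul, one_mul, hpowr r hr.1]
    rw [intervalIntegral.integral_congr he, intervalIntegral.integral_add
      intervalIntegrable_id ((Continuous.intervalIntegrable (by
        rw [continuous_iff_continuousAt]; intro x
        exact Real.continuousAt_rpow_const x (α+1) (Or.inr (by linarith))) _ _))]
    rw [integral_id, integral_rpow (Or.inl (by linarith)),
      Real.zero_rpow (by linarith : α + 1 + 1 ≠ 0)]
    ring_nf
  have hJy : (∫ r in (0:ℝ)..R, (1 + r ^ α) * y * r) = y * (R^2/2 + R^(α+2)/(α+2)) := by
    have he : ∀ r ∈ Set.uIcc (0:ℝ) R, (1 + r ^ α) * y * r = y * ((1 + r ^ α) * r) := by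
      intros; ring
    rw [intervalIntegral.integral_congr he, intervalIntegral.integral_const_mul, hJ]
  have hkey : (2/R^2) * (y * (R^2/2 + R^(α+2)/(α+2))) = (1 + 2*R^α/(α+2)) * y := by
    have h2 : R ^ (α+2) = R ^ α * R ^ 2 := by
      rw [show (α+2 : ℝ) = α + ((2:ℕ):ℝ) by norm_num, Real.rpow_add hR, Real.rpow_natCast]
    rw [h2]; field_simp
  have hu_nonneg : ∀ r ∈ Set.Icc (0:ℝ) R, (0:ℝ) ≤ (1 + r ^ α) * y :=
    fun r hr => mul_nonneg (by linarith [hrpn r hr.1]) hy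
  refine ⟨?_, ?_, ?_, ?_⟩
  · apply mul_nonneg hR2.le
    apply intervalIntegral.integral_nonneg hR.le
    intro r hr
    have h1 : Real.exp (-((1 + r ^ α) * y)) ≤ 1 := Real.exp_le_one_iff.mpr (by
      simpa using hu_nonneg r hr)
    exact mul_nonneg (by linarith) hr.1
  · have hle : (∫ r in (0:ℝ)..R, (1 - Real.exp (-((1 + r ^ α) * y))) * r)
        ≤ ∫ r in (0:ℝ)..R, r := by
      apply intervalIntegral.integral_mono_on hR.le hci intervalIntegrable_id
      intro r hr
      have h1 : (0:ℝ) ≤ Real.exp (-((1 + r ^ α) * y)) := (Real.exp_pos _).le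
      nlinarith [hr.1]
    have h2 : (∫ r in (0:ℝ)..R, r) = R^2/2 := by
      rw [integral_id]; ring
    rw [h2] at hle
    calc (2/R^2) * (∫ r in (0:ℝ)..R, (1 - Real.exp (-((1 + r ^ α) * y))) * r)
        ≤ (2/R^2) * (R^2/2) := by nlinarith
      _ = 1 := by field_simp
  · have hle : (∫ r in (0:ℝ)..R, (1 - Real.exp (-((1 + r ^ α) * y))) * r)
        ≤ ∫ r in (0:ℝ)..R, (1 + r ^ α) * y * r := by
      apply intervalIntegral.integral_mono_on hR.le hci hv1
      intro r hr
      have h1 : 1 - (1 + r ^ α) * y ≤ Real.exp (-((1 + r ^ α) * y)) := by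
        linarith [Real.add_one_le_exp (-((1 + r ^ α) * y))]
      nlinarith [hr.1]
    rw [hJy] at hle
    rw [← hkey]
    nlinarith
  · have hge : (∫ r in (0:ℝ)..R, (1 + r ^ α) * y * r - (1+R^α)^2 * y^2 * r)
        ≤ ∫ r in (0:ℝ)..R, (1 - Real.exp (-((1 + r ^ α) * y))) * r := by
      apply intervalIntegral.integral_mono_on hR.le hv2 hci
      intro r hr
      have hu := hu_nonneg r hr
      have h1 := exp_neg_lb_aux hu
      have hra : r ^ α ≤ R ^ α := Real.rpow_le_rpow hr.1 hr.2 hα.le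
      have h2 : ((1 + r ^ α) * y)^2 ≤ (1+R^α)^2 * y^2 := by
        rw [mul_pow]
        apply mul_le_mul_of_nonneg_right _ (sq_nonneg y)
        apply pow_le_pow_left₀ (by linarith [hrpn r hr.1]) (by linarith)
      nlinarith [hr.1]
    have hsplit : (∫ r in (0:ℝ)..R, (1 + r ^ α) * y * r - (1+R^α)^2 * y^2 * r)
        = y * (R^2/2 + R^(α+2)/(α+2)) - (1+R^α)^2 * y^2 * (R^2/2) := by
      rw [intervalIntegral.integral_sub hv1 (by
        apply Continuous.intervalIntegrable; fun_prop), hJy,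
        intervalIntegral.integral_const_mul, integral_id]
      ring
    rw [hsplit] at hge
    have hfin : (2/R^2) * ((1+R^α)^2 * y^2 * (R^2/2)) = (1+R^α)^2 * y^2 := by
      field_simp
    nlinarith [hge, hkey, hfin]

open intervalIntegral in
private lemma F_mono_aux (α R : ℝ) (hα : 0 < α) (hR : 0 < R) :
    Monotone fun y : ℝ => (2/R^2) * ∫ r in (0:ℝ)..R, (1 - Real.exp (-((1 + r ^ α) * y))) * r := by
  intro y₁ y₂ h
  have hR2 : (0:ℝ) ≤ 2 / R ^ 2 := by positivity
  apply mul_le_mul_of_nonneg_left _ hR2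
  have hrpow : Continuous fun r : ℝ => r ^ α := by
    rw [continuous_iff_continuousAt]; intro x
    exact Real.continuousAt_rpow_const x α (Or.inr hα.le)
  apply intervalIntegral.integral_mono_on hR.le
    ((by fun_prop : Continuous fun r : ℝ =>
      (1 - Real.exp (-((1 + r ^ α) * y₁))) * r).intervalIntegrable _ _)
    ((by fun_prop : Continuous fun r : ℝ =>
      (1 - Real.exp (-((1 + r ^ α) * y₂))) * r).intervalIntegrable _ _)
  intro r hr
  have h1 : (0:ℝ) ≤ r ^ α := Real.rpow_nonneg hr.1 α
  have h2 : Real.exp (-((1 + r ^ α) * y₂)) ≤ Real.exp (-((1 + r ^ α) * y₁)) := by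
    apply Real.exp_le_exp.mpr
    nlinarith
  nlinarith [hr.1]

set_option maxHeartbeats 1000000 in
theorem secrecy_outage_asymptotics_user_n
    (α δ R μ₁ μ₂ an Rn : ℝ) (M n : ℕ)
    (hα : 0 < α) (hδ : δ = 2 / α) (hR : 0 < R) (hμ₁ : 0 < μ₁) (hμ₂ : 0 < μ₂)
    (han : 0 < an) (han1 : an < 1) (hRn : 0 < Rn) (hn1 : 1 ≤ n) (hnM : n ≤ M)
    (F : ℝ → ℝ)
    (hF : ∀ y : ℝ, F y = (2 / R ^ 2) * ∫ r in (0 : ℝ)..R, (1 - Real.exp (-((1 + r ^ α) * y))) * r)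
    (Fn : ℝ → ℝ)
    (hFn : ∀ y : ℝ, Fn y = ∑ k ∈ Finset.Icc n M, (M.choose k : ℝ) * F y ^ k * (1 - F y) ^ (M - k))
    (ℓ φn : ℝ)
    (hℓ : ℓ = 1 + 2 * R ^ α / (α + 2))
    (hφn : φn = (M.factorial : ℝ) / ((M - n).factorial * (n - 1).factorial))
    (f : ℝ → ℝ)
    (hf : ∀ x : ℝ, 0 < x →
      f x = μ₁ * Real.exp (-(μ₁ * upperIncGamma δ (μ₂ * x) / x ^ δ)) *
        (μ₂ ^ δ * Real.exp (-(μ₂ * x)) / x + δ * upperIncGamma δ (μ₂ * x) / x ^ (δ + 1)))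
    (hint : IntegrableOn (fun x : ℝ => f x * ((2 : ℝ) ^ Rn * (1 + x) - 1) ^ n) (Set.Ioi 0))
    (Q : ℝ)
    (hQ : Q = ∫ x in Set.Ioi (0 : ℝ), f x * ((2 : ℝ) ^ Rn * (1 + x) - 1) ^ n) :
    Filter.Tendsto
      (fun ρ : ℝ => ρ ^ n *
        ∫ x in Set.Ioi (0 : ℝ), f x * Fn (((2 : ℝ) ^ Rn * (1 + x) - 1) / (ρ * an)))
      Filter.atTop
      (nhds ((φn * ℓ ^ n / (n * an ^ n)) * Q)) := by
  have hℓpos : 0 < ℓ := by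
    rw [hℓ]
    have : (0:ℝ) < R ^ α := Real.rpow_pos_of_pos hR α
    positivity
  have hc_pos : ∀ x : ℝ, 0 < x → 0 < (2 : ℝ) ^ Rn * (1 + x) - 1 := by
    intro x hx
    have h1 : (1:ℝ) < (2:ℝ) ^ Rn := by
      apply Real.one_lt_rpow_iff_of_pos (by norm_num) |>.mpr
      exact Or.inl ⟨by norm_num, hRn⟩
    nlinarith
  -- F facts specialized
  have hF0 : ∀ y : ℝ, 0 ≤ y → 0 ≤ F y := by
    intro y hy; rw [hF]; exact (F_facts_aux α R y hα hR hy).1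
  have hF1 : ∀ y : ℝ, 0 ≤ y → F y ≤ 1 := by
    intro y hy; rw [hF]; exact (F_facts_aux α R y hα hR hy).2.1
  have hFle : ∀ y : ℝ, 0 ≤ y → F y ≤ ℓ * y := by
    intro y hy; rw [hF, hℓ]; exact (F_facts_aux α R y hα hR hy).2.2.1
  have hFge : ∀ y : ℝ, 0 ≤ y → ℓ * y - (1+R^α)^2 * y^2 ≤ F y := by
    intro y hy; rw [hF, hℓ]; exact (F_facts_aux α R y hα hR hy).2.2.2
  have hFmeas : Measurable F := by
    have h : F = fun y : ℝ =>
        (2/R^2) * ∫ r in (0:ℝ)..R, (1 - Real.exp (-((1 + r ^ α) * y))) * r := funext hF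
    rw [h]; exact (F_mono_aux α R hα hR).measurable
  have hFnmeas : Measurable Fn := by
    have h : Fn = fun y : ℝ =>
        ∑ k ∈ Finset.Icc n M, (M.choose k : ℝ) * F y ^ k * (1 - F y) ^ (M - k) := funext hFn
    rw [h]
    exact Finset.measurable_sum _ fun k _ =>
      (measurable_const.mul (hFmeas.pow_const k)).mul
        ((measurable_const.sub hFmeas).pow_const (M - k))
  -- Fn bounds
  have hsum : (∑ k ∈ Finset.Icc n M, (M.choose k:ℝ)) ≤ 2^M := by
    have h : (∑ k ∈ Finset.Icc n M, M.choose k) ≤ 2^M := by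
      calc ∑ k ∈ Finset.Icc n M, M.choose k
          ≤ ∑ k ∈ Finset.range (M+1), M.choose k :=
            Finset.sum_le_sum_of_subset (fun k hk => by
              simp only [Finset.mem_Icc, Finset.mem_range] at *; omega)
        _ = 2^M := Nat.sum_range_choose M
    exact_mod_cast h
  have hFn0 : ∀ y : ℝ, 0 ≤ y → 0 ≤ Fn y := by
    intro y hy
    rw [hFn]
    apply Finset.sum_nonneg
    intro k hk
    have h0 := hF0 y hy
    have h1 := hF1 y hy
    exact mul_nonneg (mul_nonneg (Nat.cast_nonneg _) (pow_nonneg h0 _))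
      (pow_nonneg (by linarith) _)
  have hFnle : ∀ y : ℝ, 0 ≤ y → Fn y ≤ 2^M * (ℓ*y)^n := by
    intro y hy
    have h0 := hF0 y hy
    have h1 := hF1 y hy
    have hle := hFle y hy
    rw [hFn]
    calc ∑ k ∈ Finset.Icc n M, (M.choose k:ℝ) * F y^k * (1-F y)^(M-k)
        ≤ ∑ k ∈ Finset.Icc n M, (M.choose k:ℝ) * F y^n := by
          apply Finset.sum_le_sum
          intro k hk
          simp only [Finset.mem_Icc] at hk
          have hpk : F y ^ k ≤ F y ^ n := pow_le_pow_of_le_one h0 h1 hk.1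
          have h1k : (1 - F y)^(M-k) ≤ 1 := pow_le_one₀ (by linarith) (by linarith)
          calc (M.choose k:ℝ) * F y^k * (1-F y)^(M-k)
              ≤ (M.choose k:ℝ) * F y^k * 1 := by
                apply mul_le_mul_of_nonneg_left h1k (by positivity)
            _ = (M.choose k:ℝ) * F y^k := mul_one _
            _ ≤ (M.choose k:ℝ) * F y^n :=
                mul_le_mul_of_nonneg_left hpk (Nat.cast_nonneg _)
      _ = (∑ k ∈ Finset.Icc n M, (M.choose k:ℝ)) * F y^n := by rw [← Finset.sum_mul]
      _ ≤ 2^M * F y^n := mul_le_mul_of_nonneg_right hsum (pow_nonneg h0 n)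
      _ ≤ 2^M * (ℓ*y)^n := by
          apply mul_le_mul_of_nonneg_left (pow_le_pow_left₀ h0 hle n) (by positivity)
  -- f nonneg and a.e.-measurable on Ioi 0
  have hf_nonneg : ∀ x : ℝ, 0 < x → 0 ≤ f x := by
    intro x hx
    rw [hf x hx]
    have hG : 0 ≤ upperIncGamma δ (μ₂ * x) := by
      apply MeasureTheory.setIntegral_nonneg measurableSet_Ioi
      intro t ht
      have ht0 : 0 < t := lt_trans (by positivity) ht
      exact mul_nonneg (Real.rpow_nonneg ht0.le _) (Real.exp_pos _).le
    have hδ0 : 0 < δ := by rw [hδ]; positivity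
    apply mul_nonneg (mul_nonneg hμ₁.le (Real.exp_pos _).le)
    apply add_nonneg
    · exact div_nonneg (mul_nonneg (Real.rpow_nonneg hμ₂.le _) (Real.exp_pos _).le) hx.le
    · exact div_nonneg (mul_nonneg hδ0.le hG) (Real.rpow_nonneg hx.le _)
  have hfaesm : AEStronglyMeasurable f (volume.restrict (Set.Ioi 0)) := by
    have h1 := hint.aestronglyMeasurable
    have hcm : Measurable fun x : ℝ => (((2:ℝ)^Rn*(1+x)-1)^n)⁻¹ := by fun_prop
    have h2 := h1.mul hcm.aestronglyMeasurable
    apply h2.congr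
    rw [Filter.EventuallyEq, ae_restrict_iff' measurableSet_Ioi]
    apply ae_of_all
    intro x hx
    have hc := hc_pos x hx
    show f x * ((2:ℝ)^Rn*(1+x)-1)^n * (((2:ℝ)^Rn*(1+x)-1)^n)⁻¹ = f x
    rw [mul_assoc, mul_inv_cancel₀ (pow_ne_zero _ hc.ne'), mul_one]
  -- the "swap" identity
  have hswap : ∀ ρ : ℝ,
      (∫ x in Set.Ioi (0:ℝ), f x * (ρ^n * Fn (((2:ℝ)^Rn*(1+x)-1) / (ρ * an))))
      = ρ ^ n * ∫ x in Set.Ioi (0:ℝ), f x * Fn (((2:ℝ)^Rn*(1+x)-1) / (ρ * an)) := by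
    intro ρ
    rw [← MeasureTheory.integral_const_mul]
    congr 1
    ext x
    ring
  -- main dominated convergence
  have hmain : Filter.Tendsto
      (fun ρ : ℝ => ∫ x in Set.Ioi (0:ℝ), f x * (ρ^n * Fn (((2:ℝ)^Rn*(1+x)-1) / (ρ * an))))
      atTop
      (nhds (∫ x in Set.Ioi (0:ℝ),
        f x * ((M.choose n : ℝ) * (ℓ^n * ((2:ℝ)^Rn*(1+x)-1)^n / an^n)))) := by
    apply MeasureTheory.tendsto_integral_filter_of_dominated_convergence
      (bound := fun x : ℝ => (2^M * ℓ^n / an^n) * (f x * ((2:ℝ)^Rn*(1+x)-1)^n))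
    · -- measurability
      apply Filter.Eventually.of_forall
      intro ρ
      apply hfaesm.mul
      apply Measurable.aestronglyMeasurable
      exact measurable_const.mul (hFnmeas.comp (by fun_prop))
    · -- bound
      filter_upwards [eventually_ge_atTop (1:ℝ)] with ρ hρ
      rw [ae_restrict_iff' measurableSet_Ioi]
      apply ae_of_all
      intro x hx
      have hc := hc_pos x hx
      have hρ0 : (0:ℝ) < ρ := by linarith
      set c : ℝ := (2:ℝ)^Rn*(1+x)-1 with hcdef
      have hy0 : 0 ≤ c / (ρ * an) := div_nonneg hc.le (by positivity)
      have hb1 := hFn0 _ hy0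
      have hb2 := hFnle _ hy0
      have hid : ρ^n * (2^M * (ℓ * (c / (ρ * an)))^n) = 2^M * ℓ^n / an^n * c^n := by
        rw [mul_pow, div_pow, mul_pow]
        have hρn : (ρ:ℝ)^n ≠ 0 := pow_ne_zero _ (by linarith)
        have hann : an^n ≠ 0 := pow_ne_zero _ han.ne'
        field_simp
      have h3 : ρ^n * Fn (c / (ρ * an)) ≤ 2^M * ℓ^n / an^n * c^n := by
        calc ρ^n * Fn (c / (ρ * an)) ≤ ρ^n * (2^M * (ℓ * (c / (ρ * an)))^n) := by
              apply mul_le_mul_of_nonneg_left hb2 (by positivity)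
          _ = 2^M * ℓ^n / an^n * c^n := hid
      have hfx := hf_nonneg x hx
      rw [Real.norm_eq_abs, abs_of_nonneg (by positivity)]
      calc f x * (ρ^n * Fn (c / (ρ * an)))
          ≤ f x * (2^M * ℓ^n / an^n * c^n) := mul_le_mul_of_nonneg_left h3 hfx
        _ = 2^M * ℓ^n / an^n * (f x * c^n) := by ring
    · -- integrability of bound
      exact hint.const_mul _
    · -- pointwise limit
      rw [ae_restrict_iff' measurableSet_Ioi]
      apply ae_of_all
      intro x hx
      have hc := hc_pos x hx
      set c : ℝ := (2:ℝ)^Rn*(1+x)-1 with hcdef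
      have hy : ∀ ρ : ℝ, 1 ≤ ρ → 0 ≤ c / (ρ * an) := by
        intro ρ hρ
        exact div_nonneg hc.le (by nlinarith)
      -- A : F(...) → 0
      have hA : Filter.Tendsto (fun ρ : ℝ => F (c / (ρ * an))) atTop (nhds 0) := by
        apply tendsto_of_tendsto_of_tendsto_of_le_of_le' (g := fun _ : ℝ => (0:ℝ))
          (h := fun ρ : ℝ => (ℓ * c / an) * ρ⁻¹)
        · exact tendsto_const_nhds
        · have h := tendsto_inv_atTop_zero (𝕜 := ℝ) |>.const_mul (ℓ * c / an)
          simpa using h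
        · filter_upwards [eventually_ge_atTop 1] with ρ hρ
          exact hF0 _ (hy ρ hρ)
        · filter_upwards [eventually_ge_atTop 1] with ρ hρ
          have h1 := hFle _ (hy ρ hρ)
          have hρ0 : ρ ≠ 0 := by linarith
          have h2 : ℓ * (c / (ρ * an)) = ℓ * c / an * ρ⁻¹ := by field_simp
          linarith [h2 ▸ h1]
      -- B : ρ * F(...) → ℓ c / an
      have hB : Filter.Tendsto (fun ρ : ℝ => ρ * F (c / (ρ * an))) atTop
          (nhds (ℓ * c / an)) := by
        apply tendsto_of_tendsto_of_tendsto_of_le_of_le'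
          (g := fun ρ : ℝ => ℓ * c / an - (1+R^α)^2 * (c / an)^2 * ρ⁻¹)
          (h := fun _ : ℝ => ℓ * c / an)
        · have h := tendsto_inv_atTop_zero (𝕜 := ℝ) |>.const_mul ((1+R^α)^2 * (c / an)^2)
          have h2 := (tendsto_const_nhds (α := ℝ) (x := ℓ * c / an) (f := atTop)).sub h
          simpa using h2
        · exact tendsto_const_nhds
        · filter_upwards [eventually_ge_atTop 1] with ρ hρ
          have h1 := hFge _ (hy ρ hρ)
          have hρ0 : ρ ≠ 0 := by linarith
          have hρp : (0:ℝ) < ρ := by linarith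
          have h2 : ρ * (ℓ * (c / (ρ * an)) - (1+R^α)^2 * (c / (ρ * an))^2)
              = ℓ * c / an - (1+R^α)^2 * (c / an)^2 * ρ⁻¹ := by field_simp
          nlinarith [mul_le_mul_of_nonneg_left h1 hρp.le]
        · filter_upwards [eventually_ge_atTop 1] with ρ hρ
          have h1 := hFle _ (hy ρ hρ)
          have hρ0 : ρ ≠ 0 := by linarith
          have hρp : (0:ℝ) < ρ := by linarith
          have h2 : ρ * (ℓ * (c / (ρ * an))) = ℓ * c / an := by field_simp
          nlinarith [mul_le_mul_of_nonneg_left h1 hρp.le]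
      -- sum decomposition
      have hcongr : ∀ᶠ ρ : ℝ in atTop,
          (∑ k ∈ Finset.Icc n M, (M.choose k:ℝ) * (ρ * F (c / (ρ * an)))^n
            * (F (c / (ρ * an)))^(k-n) * (1 - F (c / (ρ * an)))^(M-k))
          = ρ^n * Fn (c / (ρ * an)) := by
        apply Filter.Eventually.of_forall
        intro ρ
        rw [hFn, Finset.mul_sum]
        apply Finset.sum_congr rfl
        intro k hk
        simp only [Finset.mem_Icc] at hk
        have hpw : F (c / (ρ * an)) ^ n * F (c / (ρ * an)) ^ (k-n)
            = F (c / (ρ * an)) ^ k := by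
          rw [← pow_add]
          congr 1
          omega
        rw [mul_pow, ← hpw]
        ring
      have hsumlim : Filter.Tendsto
          (fun ρ : ℝ => ∑ k ∈ Finset.Icc n M, (M.choose k:ℝ) * (ρ * F (c / (ρ * an)))^n
            * (F (c / (ρ * an)))^(k-n) * (1 - F (c / (ρ * an)))^(M-k)) atTop
          (nhds (∑ k ∈ Finset.Icc n M, (M.choose k:ℝ) * (ℓ * c / an)^n
            * (0:ℝ)^(k-n) * (1 - (0:ℝ))^(M-k))) := by
        apply tendsto_finset_sum
        intro k _
        exact ((tendsto_const_nhds.mul (hB.pow n)).mul (hA.pow (k-n))).mul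
          ((tendsto_const_nhds.sub hA).pow (M-k))
      have hsumval : (∑ k ∈ Finset.Icc n M, (M.choose k:ℝ) * (ℓ * c / an)^n
          * (0:ℝ)^(k-n) * (1 - (0:ℝ))^(M-k))
          = (M.choose n : ℝ) * (ℓ^n * c^n / an^n) := by
        rw [Finset.sum_eq_single_of_mem n (Finset.mem_Icc.mpr ⟨le_refl n, hnM⟩)]
        · rw [Nat.sub_self, pow_zero]
          rw [div_pow, mul_pow]
          norm_num
        · intro k hk hkn
          simp only [Finset.mem_Icc] at hk
          rw [zero_pow (by omega : k - n ≠ 0)]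
          ring
      have hlim2 : Filter.Tendsto (fun ρ : ℝ => ρ^n * Fn (c / (ρ * an))) atTop
          (nhds ((M.choose n : ℝ) * (ℓ^n * c^n / an^n))) := by
        rw [← hsumval]
        exact hsumlim.congr' hcongr
      exact hlim2.const_mul (f x)
  -- final value identity
  have hCn : (M.choose n : ℝ) = φn / n := by
    have hch : (M.choose n) * (n * (n-1).factorial) * (M-n).factorial = M.factorial := by
      rw [Nat.mul_factorial_pred (by omega)]
      exact Nat.choose_mul_factorial_mul_factorial hnM
    have hchR : (M.choose n : ℝ) * ((n:ℝ) * ((n-1).factorial:ℝ)) * ((M-n).factorial:ℝ)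
        = (M.factorial:ℝ) := by exact_mod_cast hch
    have hn0 : (n:ℝ) ≠ 0 := Nat.cast_ne_zero.mpr (by omega)
    have hf1 : ((n-1).factorial:ℝ) ≠ 0 := Nat.cast_ne_zero.mpr (Nat.factorial_ne_zero _)
    have hf2 : ((M-n).factorial:ℝ) ≠ 0 := Nat.cast_ne_zero.mpr (Nat.factorial_ne_zero _)
    rw [hφn]
    field_simp
    linear_combination hchR
  have hval : (∫ x in Set.Ioi (0:ℝ),
      f x * ((M.choose n : ℝ) * (ℓ^n * ((2:ℝ)^Rn*(1+x)-1)^n / an^n)))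
      = (φn * ℓ ^ n / (n * an ^ n)) * Q := by
    have heq : (fun x : ℝ => f x * ((M.choose n : ℝ) * (ℓ^n * ((2:ℝ)^Rn*(1+x)-1)^n / an^n)))
        = fun x : ℝ => ((M.choose n : ℝ) * ℓ^n / an^n)
            * (f x * ((2:ℝ)^Rn*(1+x)-1)^n) := by
      ext x; ring
    rw [heq, MeasureTheory.integral_const_mul, ← hQ, hCn]
    have hn0 : (n:ℝ) ≠ 0 := Nat.cast_ne_zero.mpr (by omega)
    field_simp
  rw [← hval]
  exact hmain.congr hswap
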